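/- Suppose P_t is a Markov semigroup on bounded measurable functions over C_τ satisfying the asymptotic log-Harnack inequality P_t log f(η) ≤ log P_t f(ξ) + Λ(η)‖ξ−η‖_τ² + Γ_t(η)‖∇ log f‖_∞‖ξ−η‖_τ for all bounded f with finite Lipschitz log-gradient, where Γ_t(η) = c e^{−τ₀ t} e^{δ‖η‖_τ^{2α}} → 0 as t → ∞. Then applying this to f = 1 + ε g and letting ε→0 yields the asymptotic gradient estimate |∇P_t g|(ξ) ≤ √(2Λ(ξ)) √(P_t g² − (P_t g)²)(ξ) + ‖∇g‖_∞ Γ_t(ξ) for bounded Lipschitz g. -/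

import Mathlib

open Real Topology Filter MeasureTheory

private lemma exp_le_right {x : ℝ} (hx : 0 ≤ x) :
    Real.exp x ≤ 1 + x + x ^ 2 / 2 * Real.exp x := by
  have hderiv : ∀ y : ℝ, HasDerivAt (fun x : ℝ => 1 + x + x ^ 2 / 2 * Real.exp x - Real.exp x)
      (1 + (y * Real.exp y + y ^ 2 / 2 * Real.exp y) - Real.exp y) y := by
    intro y
    have h1 : HasDerivAt (fun x : ℝ => x ^ 2 / 2) y y := by
      simpa using ((hasDerivAt_pow 2 y).div_const 2)
    have h4 := (((hasDerivAt_id y).const_add (1:ℝ)).add (h1.mul (Real.hasDerivAt_exp y))).sub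
      (Real.hasDerivAt_exp y)
    exact h4
  have key : Monotone (fun x : ℝ => 1 + x + x ^ 2 / 2 * Real.exp x - Real.exp x) := by
    apply monotone_of_deriv_nonneg
    · intro y; exact (hderiv y).differentiableAt
    · intro y
      rw [(hderiv y).deriv]
      have h6 : (1 - y) * Real.exp y ≤ 1 := by
        have h := mul_le_mul_of_nonneg_right (Real.add_one_le_exp (-y)) (Real.exp_pos y).le
        rwa [← Real.exp_add, neg_add_cancel, Real.exp_zero, neg_add_eq_sub] at h
      nlinarith [Real.exp_pos y, mul_nonneg (sq_nonneg y) (Real.exp_pos y).le]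
  have h0 := key hx
  norm_num at h0
  linarith

private lemma exp_le_left {x : ℝ} (hx : x ≤ 0) :
    Real.exp x ≤ 1 + x + x ^ 2 / 2 := by
  have hderiv : ∀ y : ℝ, HasDerivAt (fun x : ℝ => 1 + x + x ^ 2 / 2 - Real.exp x)
      (1 + y - Real.exp y) y := by
    intro y
    have h1 : HasDerivAt (fun x : ℝ => x ^ 2 / 2) y y := by
      simpa using ((hasDerivAt_pow 2 y).div_const 2)
    have h4 := (((hasDerivAt_id y).const_add (1:ℝ)).add h1).sub (Real.hasDerivAt_exp y)
    exact h4
  have key : Antitone (fun x : ℝ => 1 + x + x ^ 2 / 2 - Real.exp x) := by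
    apply antitone_of_deriv_nonpos
    · intro y; exact (hderiv y).differentiableAt
    · intro y
      rw [(hderiv y).deriv]
      have := Real.add_one_le_exp y
      linarith
  have h0 := key hx
  norm_num at h0
  linarith

private lemma exp_taylor {x M : ℝ} (h : |x| ≤ M) :
    Real.exp x ≤ 1 + x + x ^ 2 / 2 * Real.exp M := by
  have hM : 0 ≤ M := le_trans (abs_nonneg x) h
  rcases le_total x 0 with hx | hx
  · have h1 := exp_le_left hx
    have h2 : (1:ℝ) ≤ Real.exp M := by
      rw [show (1:ℝ) = Real.exp 0 by simp]; exact Real.exp_le_exp.mpr hM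
    nlinarith [sq_nonneg x]
  · have h1 := exp_le_right hx
    have h2 : Real.exp x ≤ Real.exp M := Real.exp_le_exp.mpr (le_trans (le_abs_self x) h)
    nlinarith [sq_nonneg x, Real.exp_pos x]

private lemma integrable_bdd {E : Type*} [MeasurableSpace E] {μ : Measure E}
    [IsFiniteMeasure μ] {g : E → ℝ} (hg : Measurable g) {C : ℝ} (hC : ∀ x, |g x| ≤ C) :
    Integrable g μ := by
  refine (integrable_const C).mono' hg.aestronglyMeasurable ?_
  exact Filter.Eventually.of_forall (fun x => by simpa using hC x)

private lemma integrable_comb {E : Type*} [MeasurableSpace E] {μ : Measure E}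
    [IsFiniteMeasure μ] {u v : E → ℝ} (hu : Integrable u μ) (hv : Integrable v μ)
    (c₀ c₁ c₂ : ℝ) : Integrable (fun x => c₀ + c₁ * u x + c₂ * v x) μ := by
  have e : (fun x => c₀ + c₁ * u x + c₂ * v x)
      = fun x => c₀ + (c₁ * u x + c₂ * v x) := funext fun x => by ring
  rw [e]
  exact (integrable_const _).add ((hu.const_mul _).add (hv.const_mul _))

private lemma integral_comb {E : Type*} [MeasurableSpace E] {μ : Measure E}
    [IsProbabilityMeasure μ] {u v : E → ℝ} (hu : Integrable u μ) (hv : Integrable v μ)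
    (c₀ c₁ c₂ : ℝ) :
    ∫ x, (c₀ + c₁ * u x + c₂ * v x) ∂μ
      = c₀ + c₁ * (∫ x, u x ∂μ) + c₂ * ∫ x, v x ∂μ := by
  have A : Integrable (fun x => c₁ * u x) μ := hu.const_mul c₁
  have B : Integrable (fun x => c₂ * v x) μ := hv.const_mul c₂
  have h0 : Integrable (fun _ : E => c₀) μ := integrable_const _
  have AB : Integrable (fun x => c₁ * u x + c₂ * v x) μ := A.add B
  have e : (fun x => c₀ + c₁ * u x + c₂ * v x)
      = fun x => c₀ + (c₁ * u x + c₂ * v x) := funext fun x => by ring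
  rw [e, integral_add h0 AB, integral_add A B, integral_const_mul, integral_const_mul,
    integral_const]
  simp only [probReal_univ, smul_eq_mul, one_mul]
  ring

set_option maxHeartbeats 2000000 in
theorem asymptotic_gradient_estimate {E : Type*} [MetricSpace E] [MeasurableSpace E]
    (κ : ℝ → E → Measure E) (hκ : ∀ t x, IsProbabilityMeasure (κ t x))
    (nrm : E → ℝ) (c δ τ0 α : ℝ) (hc : 0 < c) (hδ : 0 < δ) (hτ0 : 0 < τ0)
    (hα : α ∈ Set.Icc (0:ℝ) 1)
    (H : ∀ t : ℝ, 0 ≤ t → ∀ f : E → ℝ, Measurable f → (∀ x, 0 < f x) →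
      (∃ C, ∀ x, f x ≤ C) → ∀ L : ℝ,
      (∀ x y, |Real.log (f x) - Real.log (f y)| ≤ L * dist x y) →
      ∀ ξ η : E,
        (∫ z, Real.log (f z) ∂(κ t η)) ≤ Real.log (∫ z, f z ∂(κ t ξ))
          + (c * Real.exp (δ * nrm η ^ (2 * α))) * dist ξ η ^ 2
          + (c * Real.exp (-τ0 * t) * Real.exp (δ * nrm η ^ (2 * α))) * L * dist ξ η) :
    ∀ t : ℝ, 0 ≤ t → ∀ g : E → ℝ, Measurable g → (∃ C, ∀ x, |g x| ≤ C) →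
      ∀ L : ℝ, 0 ≤ L → (∀ x y, |g x - g y| ≤ L * dist x y) → ∀ ξ : E,
      Filter.limsup
          (fun η => |(∫ z, g z ∂(κ t ξ)) - ∫ z, g z ∂(κ t η)| / dist ξ η) (𝓝[≠] ξ)
        ≤ Real.sqrt (2 * (c * Real.exp (δ * nrm ξ ^ (2 * α))))
            * Real.sqrt ((∫ z, (g z) ^ 2 ∂(κ t ξ)) - (∫ z, g z ∂(κ t ξ)) ^ 2)
          + L * (c * Real.exp (-τ0 * t) * Real.exp (δ * nrm ξ ^ (2 * α))) := by
  intro t ht g hg hgbdd L hL0 hLip ξ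
  obtain ⟨C, hC⟩ := hgbdd
  have hC0 : 0 ≤ C := (abs_nonneg (g ξ)).trans (hC ξ)
  set Λ := c * Real.exp (δ * nrm ξ ^ (2 * α)) with hΛdef
  set Γt := c * Real.exp (-τ0 * t) * Real.exp (δ * nrm ξ ^ (2 * α)) with hΓdef
  have hΛ : 0 < Λ := by rw [hΛdef]; positivity
  have hΓ : 0 < Γt := by rw [hΓdef]; positivity
  set a := ∫ z, g z ∂(κ t ξ) with ha_def
  set V := (∫ z, (g z) ^ 2 ∂(κ t ξ)) - a ^ 2 with hV_def
  -- basic integrability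
  have Ig : ∀ x' : E, Integrable g (κ t x') := fun x' => by
    haveI := hκ t x'; exact integrable_bdd hg hC
  have Ig2 : ∀ x' : E, Integrable (fun x => (g x) ^ 2) (κ t x') := fun x' => by
    haveI := hκ t x'
    refine integrable_bdd (hg.pow_const 2) (C := C ^ 2) (fun x => ?_)
    rw [abs_pow]
    exact pow_le_pow_left₀ (abs_nonneg _) (hC x) 2
  have ha_abs : |a| ≤ C := by
    haveI := hκ t ξ
    have := norm_integral_le_of_norm_le_const (μ := κ t ξ) (f := g) (C := C)
      (Filter.Eventually.of_forall (fun x => by simpa using hC x))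
    simpa [measure_univ, ha_def] using this
  have hwb : ∀ x, |g x - a| ≤ 2 * C := by
    intro x
    calc |g x - a| ≤ |g x| + |a| := abs_sub _ _
    _ ≤ 2 * C := by have := hC x; linarith
  have Iw2 : ∀ x' : E, Integrable (fun x => (g x - a) ^ 2) (κ t x') := fun x' => by
    haveI := hκ t x'
    refine integrable_bdd ((hg.sub measurable_const).pow_const 2) (C := 4 * C ^ 2) (fun x => ?_)
    rw [abs_of_nonneg (sq_nonneg _)]
    nlinarith [abs_le.mp (hwb x)]
  have Ip : ∀ x' : E, Integrable (fun x => 4 * C ^ 2 - (g x - a) ^ 2) (κ t x') := fun x' =>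
    (integrable_const _).sub (Iw2 x')
  have hVw : (∫ x, (g x - a) ^ 2 ∂(κ t ξ)) = V := by
    haveI := hκ t ξ
    have h1 : (fun x => (g x - a) ^ 2)
        = fun x => a ^ 2 + (-(2 * a)) * g x + 1 * (g x) ^ 2 := funext fun x => by ring
    rw [h1, integral_comb (Ig ξ) (Ig2 ξ), ← ha_def, hV_def]
    ring
  have hV0 : 0 ≤ V := hVw ▸ integral_nonneg (fun x => sq_nonneg _)
  have hpint : ∀ x' : E, (∫ x, (4 * C ^ 2 - (g x - a) ^ 2) ∂(κ t x'))
      = 4 * C ^ 2 - ∫ x, (g x - a) ^ 2 ∂(κ t x') := fun x' => by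
    haveI := hκ t x'
    have h1 : (fun x => 4 * C ^ 2 - (g x - a) ^ 2)
        = fun x => (4 * C ^ 2) + (-1) * (g x - a) ^ 2 + 0 * (g x - a) ^ 2 :=
      funext fun x => by ring
    rw [h1, integral_comb (Iw2 x') (Iw2 x')]
    ring
  -- remainder function
  set R : ℝ → ℝ := fun d => 8 * d * C ^ 4 * Real.exp (d * (4 * C ^ 2)) + Λ * d
      + 4 * C * L * Γt * d with hR
  clear_value Λ Γt a V R
  -- second moment bound
  have moment : ∀ η : E, η ≠ ξ →
      (∫ x, (g x - a) ^ 2 ∂(κ t η)) ≤ V + R (dist ξ η) := by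
    intro η hη
    haveI := hκ t η
    set d := dist ξ η with hd_def
    have hd : 0 < d := dist_pos.mpr (Ne.symm hη)
    set p : E → ℝ := fun x => 4 * C ^ 2 - (g x - a) ^ 2 with hp
    have hp0 : ∀ x, 0 ≤ p x := fun x => by
      have := abs_le.mp (hwb x); simp only [hp]; nlinarith
    have hp4 : ∀ x, p x ≤ 4 * C ^ 2 := fun x => by
      simp only [hp]; nlinarith [sq_nonneg (g x - a)]
    have hpm : Measurable p := measurable_const.sub ((hg.sub measurable_const).pow_const 2)
    clear_value d p
    have hlip : ∀ x y, |Real.log (Real.exp (d * p x)) - Real.log (Real.exp (d * p y))|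
        ≤ (d * (4 * C * L)) * dist x y := by
      intro x y
      simp only [Real.log_exp]
      rw [← mul_sub, abs_mul, abs_of_nonneg hd.le]
      have h1 : p x - p y = (g y - g x) * ((g y - a) + (g x - a)) := by simp only [hp]; ring
      have h2 : |p x - p y| ≤ (4 * C * L) * dist x y := by
        rw [h1, abs_mul]
        have h3 : |g y - g x| ≤ L * dist x y := by
          have := hLip y x; rwa [dist_comm y x] at this
        have h4 : |(g y - a) + (g x - a)| ≤ 4 * C := by
          calc |(g y - a) + (g x - a)| ≤ |g y - a| + |g x - a| := abs_add_le _ _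
          _ ≤ 4 * C := by have := hwb x; have := hwb y; linarith
        calc |g y - g x| * |(g y - a) + (g x - a)| ≤ (L * dist x y) * (4 * C) :=
          mul_le_mul h3 h4 (abs_nonneg _) (by positivity)
        _ = (4 * C * L) * dist x y := by ring
      calc d * |p x - p y| ≤ d * ((4 * C * L) * dist x y) :=
        mul_le_mul_of_nonneg_left h2 hd.le
      _ = (d * (4 * C * L)) * dist x y := by ring
    have key := H t ht (fun x => Real.exp (d * p x)) ((hpm.const_mul d).exp)
      (fun x => Real.exp_pos _)
      ⟨Real.exp (d * (4 * C ^ 2)), fun x =>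
        Real.exp_le_exp.mpr (mul_le_mul_of_nonneg_left (hp4 x) hd.le)⟩
      (d * (4 * C * L)) hlip η ξ
    rw [dist_comm η ξ, ← hd_def, ← hΛdef, ← hΓdef] at key
    -- LHS of key
    have hLHS : (∫ z, Real.log (Real.exp (d * p z)) ∂(κ t ξ)) = d * (4 * C ^ 2 - V) := by
      haveI := hκ t ξ
      simp only [Real.log_exp]
      have h1 : (fun z => d * p z) = fun z => 0 + d * p z + 0 * p z :=
        funext fun z => by ring
      rw [h1, integral_comb (Ip ξ) (Ip ξ), hpint ξ, hVw]
      ring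
    -- integral upper bound
    set K := d ^ 2 / 2 * (4 * C ^ 2) ^ 2 * Real.exp (d * (4 * C ^ 2)) with hK
    clear_value K
    have hptwise : ∀ x, Real.exp (d * p x) ≤ 1 + d * p x + K := by
      intro x
      have h1 := exp_le_right (mul_nonneg hd.le (hp0 x))
      have h2 : (d * p x) ^ 2 / 2 * Real.exp (d * p x) ≤ K := by
        have e1 : Real.exp (d * p x) ≤ Real.exp (d * (4 * C ^ 2)) :=
          Real.exp_le_exp.mpr (mul_le_mul_of_nonneg_left (hp4 x) hd.le)
        have e2 : (d * p x) ^ 2 ≤ d ^ 2 * (4 * C ^ 2) ^ 2 := by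
          have h := mul_le_mul_of_nonneg_left
            (mul_self_le_mul_self (hp0 x) (hp4 x)) (sq_nonneg d)
          nlinarith [h]
        rw [hK]
        calc (d * p x) ^ 2 / 2 * Real.exp (d * p x)
            ≤ d ^ 2 * (4 * C ^ 2) ^ 2 / 2 * Real.exp (d * (4 * C ^ 2)) := by
              apply mul_le_mul (by linarith) e1 (Real.exp_pos _).le (by positivity)
        _ = d ^ 2 / 2 * (4 * C ^ 2) ^ 2 * Real.exp (d * (4 * C ^ 2)) := by ring
      linarith
    have hIf : Integrable (fun x => Real.exp (d * p x)) (κ t η) := by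
      refine integrable_bdd ((hpm.const_mul d).exp) (C := Real.exp (d * (4 * C ^ 2))) (fun x => ?_)
      rw [abs_of_pos (Real.exp_pos _)]
      exact Real.exp_le_exp.mpr (mul_le_mul_of_nonneg_left (hp4 x) hd.le)
    have hfub : (∫ z, Real.exp (d * p z) ∂(κ t η))
        ≤ 1 + d * (∫ x, p x ∂(κ t η)) + K := by
      have h1 : (∫ z, Real.exp (d * p z) ∂(κ t η))
          ≤ ∫ x, ((1 + K) + d * p x + 0 * p x) ∂(κ t η) := by
        refine integral_mono hIf (integrable_comb (Ip η) (Ip η) _ _ _) (fun x => ?_)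
        have := hptwise x
        linarith
      rw [integral_comb (Ip η) (Ip η)] at h1
      linarith
    have hIone : (1:ℝ) ≤ ∫ z, Real.exp (d * p z) ∂(κ t η) := by
      have := integral_mono (μ := κ t η) (integrable_const 1) hIf
        (fun x => by
          rw [← Real.exp_zero]
          exact Real.exp_le_exp.mpr (mul_nonneg hd.le (hp0 x)))
      simpa [measure_univ] using this
    have hlog : Real.log (∫ z, Real.exp (d * p z) ∂(κ t η))
        ≤ (∫ z, Real.exp (d * p z) ∂(κ t η)) - 1 :=
      Real.log_le_sub_one_of_pos (lt_of_lt_of_le one_pos hIone)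
    rw [hLHS] at key
    have hpν := hpint η
    have main : d * (∫ x, (g x - a) ^ 2 ∂(κ t η)) ≤ d * (V + R d) := by
      simp only [hR, hK] at *
      nlinarith [key, hlog, hfub, hpν]
    exact le_of_mul_le_mul_left main hd
  -- one-sided mean bound
  have mean : ∀ η : E, η ≠ ξ → ∀ s : ℝ, 0 < s → ∀ w' : E → ℝ, Measurable w' →
      (∀ x, |w' x| ≤ 2 * C) → (∀ x y, |w' x - w' y| ≤ L * dist x y) →
      (∫ x, w' x ∂(κ t ξ)) = 0 → (∀ x, (w' x) ^ 2 = (g x - a) ^ 2) →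
      (∫ x, w' x ∂(κ t η)) ≤ dist ξ η *
        (s / 2 * Real.exp (2 * C * (s * dist ξ η)) * (V + R (dist ξ η)) + Λ / s + Γt * L) := by
    intro η hη s hs w' hw'm hw'b hw'lip hw'0 hw'sq
    haveI := hκ t η
    set d := dist ξ η with hd_def
    have hd : 0 < d := dist_pos.mpr (Ne.symm hη)
    set ε := s * d with hε
    clear_value d ε
    have hε0 : 0 < ε := by rw [hε]; exact mul_pos hs hd
    have hbound : ∀ x, Real.exp (-(ε * w' x)) ≤ Real.exp (2 * C * ε) := fun x => by
      refine Real.exp_le_exp.mpr ?_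
      have := abs_le.mp (hw'b x)
      nlinarith [hε0.le]
    have hlip : ∀ x y, |Real.log (Real.exp (-(ε * w' x))) - Real.log (Real.exp (-(ε * w' y)))|
        ≤ (ε * L) * dist x y := by
      intro x y
      simp only [Real.log_exp]
      rw [show -(ε * w' x) - -(ε * w' y) = ε * (w' y - w' x) by ring, abs_mul,
        abs_of_nonneg hε0.le]
      have h3 : |w' y - w' x| ≤ L * dist x y := by
        have := hw'lip y x; rwa [dist_comm y x] at this
      calc ε * |w' y - w' x| ≤ ε * (L * dist x y) := mul_le_mul_of_nonneg_left h3 hε0.le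
      _ = (ε * L) * dist x y := by ring
    have key := H t ht (fun x => Real.exp (-(ε * w' x))) ((hw'm.const_mul ε).neg.exp)
      (fun x => Real.exp_pos _) ⟨Real.exp (2 * C * ε), hbound⟩ (ε * L) hlip η ξ
    rw [dist_comm η ξ, ← hd_def, ← hΛdef, ← hΓdef] at key
    have Iw'ξ : Integrable w' (κ t ξ) := by
      haveI := hκ t ξ; exact integrable_bdd hw'm hw'b
    have hLHS : (∫ z, Real.log (Real.exp (-(ε * w' z))) ∂(κ t ξ)) = 0 := by
      haveI := hκ t ξ
      simp only [Real.log_exp]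
      have h1 : (fun z => -(ε * w' z)) = fun z => 0 + (-ε) * w' z + 0 * w' z :=
        funext fun z => by ring
      rw [h1, integral_comb Iw'ξ Iw'ξ, hw'0]
      ring
    rw [hLHS] at key
    have Iw' : Integrable w' (κ t η) := integrable_bdd hw'm hw'b
    have Iw'2 : Integrable (fun x => (w' x) ^ 2) (κ t η) := by
      have : (fun x => (w' x) ^ 2) = fun x => (g x - a) ^ 2 := funext hw'sq
      rw [this]; exact Iw2 η
    have hIf : Integrable (fun x => Real.exp (-(ε * w' x))) (κ t η) := by
      refine integrable_bdd ((hw'm.const_mul ε).neg.exp) (C := Real.exp (2 * C * ε))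
        (fun x => ?_)
      rw [abs_of_pos (Real.exp_pos _)]
      exact hbound x
    have hptwise : ∀ x, Real.exp (-(ε * w' x))
        ≤ 1 + (-ε) * w' x + (ε ^ 2 / 2 * Real.exp (2 * C * ε)) * (w' x) ^ 2 := by
      intro x
      have habs : |(-(ε * w' x))| ≤ 2 * C * ε := by
        rw [abs_neg, abs_mul, abs_of_nonneg hε0.le]
        have := hw'b x
        nlinarith [hε0.le]
      have h1 := exp_taylor habs
      have h2 : 1 + (-(ε * w' x)) + (-(ε * w' x)) ^ 2 / 2 * Real.exp (2 * C * ε)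
          = 1 + (-ε) * w' x + (ε ^ 2 / 2 * Real.exp (2 * C * ε)) * (w' x) ^ 2 := by ring
      linarith [h1, h2.le, h2.ge]
    have hfub : (∫ z, Real.exp (-(ε * w' z)) ∂(κ t η))
        ≤ 1 + (-ε) * (∫ x, w' x ∂(κ t η))
          + (ε ^ 2 / 2 * Real.exp (2 * C * ε)) * (∫ x, (w' x) ^ 2 ∂(κ t η)) := by
      have h1 : (∫ z, Real.exp (-(ε * w' z)) ∂(κ t η))
          ≤ ∫ x, (1 + (-ε) * w' x + (ε ^ 2 / 2 * Real.exp (2 * C * ε)) * (w' x) ^ 2)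
            ∂(κ t η) :=
        integral_mono hIf (integrable_comb Iw' Iw'2 _ _ _)
          (fun x => by have := hptwise x; linarith)
      rw [integral_comb Iw' Iw'2] at h1
      linarith
    have hIpos : 0 < ∫ z, Real.exp (-(ε * w' z)) ∂(κ t η) := by
      have h1 : ∀ x, Real.exp (-(2 * C * ε)) ≤ Real.exp (-(ε * w' x)) := fun x => by
        refine Real.exp_le_exp.mpr ?_
        have := abs_le.mp (hw'b x)
        nlinarith [hε0.le]
      have := integral_mono (μ := κ t η) (integrable_const (Real.exp (-(2 * C * ε)))) hIf h1
      simp only [integral_const, probReal_univ, one_smul,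
        smul_eq_mul, one_mul] at this
      exact lt_of_lt_of_le (Real.exp_pos _) this
    have hlog := Real.log_le_sub_one_of_pos hIpos
    have hw2ν : (∫ x, (w' x) ^ 2 ∂(κ t η)) ≤ V + R d := by
      have hmo := moment η hη
      rw [← hd_def] at hmo
      have he : (fun x => (w' x) ^ 2) = fun x => (g x - a) ^ 2 := funext hw'sq
      rw [he]; exact hmo
    -- combine: ε * ∫ w' ≤ ε^2/2 e (V+Rd) + Λ d^2 + Γt ε L d
    have hcoef : 0 ≤ ε ^ 2 / 2 * Real.exp (2 * C * ε) := by positivity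
    have step : ε * (∫ x, w' x ∂(κ t η))
        ≤ ε ^ 2 / 2 * Real.exp (2 * C * ε) * (V + R d) + Λ * d ^ 2 + Γt * (ε * L) * d := by
      have h5 := mul_le_mul_of_nonneg_left hw2ν hcoef
      nlinarith [key, hlog, hfub]
    have hfin : (∫ x, w' x ∂(κ t η))
        ≤ (ε ^ 2 / 2 * Real.exp (2 * C * ε) * (V + R d) + Λ * d ^ 2 + Γt * (ε * L) * d) / ε := by
      rw [le_div_iff₀ hε0]
      nlinarith [step]
    calc (∫ x, w' x ∂(κ t η))
        ≤ (ε ^ 2 / 2 * Real.exp (2 * C * ε) * (V + R d) + Λ * d ^ 2 + Γt * (ε * L) * d) / ε :=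
        hfin
    _ = d * (s / 2 * Real.exp (2 * C * ε) * (V + R d) + Λ / s + Γt * L) := by
        rw [hε]
        field_simp
  -- absolute-value difference quotient bound
  have absQ : ∀ η : E, η ≠ ξ → ∀ s : ℝ, 0 < s →
      |a - ∫ z, g z ∂(κ t η)| / dist ξ η
        ≤ s / 2 * Real.exp (2 * C * (s * dist ξ η)) * (V + R (dist ξ η)) + Λ / s + Γt * L := by
    intro η hη s hs
    haveI := hκ t η
    have hd : 0 < dist ξ η := dist_pos.mpr (Ne.symm hη)
    have h1 := mean η hη s hs (fun x => g x - a) (hg.sub measurable_const) hwb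
      (fun x y => by simpa using hLip x y)
      (by
        haveI := hκ t ξ
        have h1 : (fun x => g x - a) = fun x => (-a) + 1 * g x + 0 * g x :=
          funext fun x => by ring
        rw [h1, integral_comb (Ig ξ) (Ig ξ), ← ha_def]
        ring)
      (fun x => rfl)
    have h2 := mean η hη s hs (fun x => a - g x) (measurable_const.sub hg)
      (fun x => by rw [abs_sub_comm]; exact hwb x)
      (fun x y => by
        have := hLip y x
        rw [show a - g x - (a - g y) = g y - g x by ring, dist_comm y x] at *
        rwa [dist_comm x y] at this ⊢)
      (by
        haveI := hκ t ξ
        have h1 : (fun x => a - g x) = fun x => a + (-1) * g x + 0 * g x :=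
          funext fun x => by ring
        rw [h1, integral_comb (Ig ξ) (Ig ξ), ← ha_def]
        ring)
      (fun x => by ring)
    have e1 : (∫ x, (g x - a) ∂(κ t η)) = (∫ z, g z ∂(κ t η)) - a := by
      have h1 : (fun x => g x - a) = fun x => (-a) + 1 * g x + 0 * g x :=
        funext fun x => by ring
      rw [h1, integral_comb (Ig η) (Ig η)]
      ring
    have e2 : (∫ x, (a - g x) ∂(κ t η)) = a - ∫ z, g z ∂(κ t η) := by
      have h1 : (fun x => a - g x) = fun x => a + (-1) * g x + 0 * g x :=
        funext fun x => by ring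
      rw [h1, integral_comb (Ig η) (Ig η)]
      ring
    rw [e1] at h1
    rw [e2] at h2
    rw [div_le_iff₀ hd, abs_le]
    constructor <;> nlinarith [h1, h2]
  -- limsup step
  by_cases hbot : (𝓝[≠] ξ) = ⊥
  · rw [hbot]
    have hz : Filter.limsup
        (fun η => |a - ∫ z, g z ∂(κ t η)| / dist ξ η) (⊥ : Filter E) = 0 := by
      rw [Filter.limsup_eq]
      have : {x : ℝ | ∀ᶠ n in (⊥ : Filter E), |a - ∫ z, g z ∂(κ t n)| / dist ξ n ≤ x}
          = Set.univ := by
        ext x; simp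
      rw [this]
      exact Real.sInf_of_not_bddBelow (not_bddBelow_univ)
    rw [hz]
    have h1 : 0 ≤ Real.sqrt (2 * Λ) * Real.sqrt V :=
      mul_nonneg (Real.sqrt_nonneg _) (Real.sqrt_nonneg _)
    have h2 : 0 ≤ L * Γt := mul_nonneg hL0 hΓ.le
    linarith
  · haveI : (𝓝[≠] ξ).NeBot := ⟨hbot⟩
    have keyls : ∀ s : ℝ, 0 < s →
        Filter.limsup (fun η => |a - ∫ z, g z ∂(κ t η)| / dist ξ η) (𝓝[≠] ξ)
          ≤ s / 2 * V + Λ / s + Γt * L := by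
      intro s hs
      set B : E → ℝ := fun η =>
        s / 2 * Real.exp (2 * C * (s * dist ξ η)) * (V + R (dist ξ η)) + Λ / s + Γt * L
        with hB
      have hev : ∀ᶠ η in 𝓝[≠] ξ, |a - ∫ z, g z ∂(κ t η)| / dist ξ η ≤ B η := by
        filter_upwards [self_mem_nhdsWithin] with η hη
        exact absQ η hη s hs
      have hdist : Tendsto (fun η => dist ξ η) (𝓝[≠] ξ) (𝓝 0) := by
        have h1 : Tendsto (fun η => dist ξ η) (𝓝 ξ) (𝓝 (dist ξ ξ)) :=
          (continuous_const.dist continuous_id).tendsto ξ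
        rw [dist_self] at h1
        exact h1.mono_left nhdsWithin_le_nhds
      have hφ : Continuous (fun d : ℝ =>
          s / 2 * Real.exp (2 * C * (s * d)) * (V + R d) + Λ / s + Γt * L) := by
        simp only [hR]
        fun_prop
      have hBtend : Tendsto B (𝓝[≠] ξ) (𝓝 (s / 2 * V + Λ / s + Γt * L)) := by
        have h2 := (hφ.tendsto 0).comp hdist
        have h4 : Tendsto B (𝓝[≠] ξ)
            (𝓝 (s / 2 * Real.exp (2 * C * (s * 0)) * (V + R 0) + Λ / s + Γt * L)) := by
          rw [hB]; exact h2
        have h3 : s / 2 * Real.exp (2 * C * (s * 0)) * (V + R 0) + Λ / s + Γt * L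
            = s / 2 * V + Λ / s + Γt * L := by
          rw [hR]
          norm_num
        rwa [h3] at h4
      have hcob : (𝓝[≠] ξ).IsCoboundedUnder (· ≤ ·)
          (fun η => |a - ∫ z, g z ∂(κ t η)| / dist ξ η) :=
        isCoboundedUnder_le_of_le (𝓝[≠] ξ) (x := 0)
          (fun η => div_nonneg (abs_nonneg _) dist_nonneg)
      calc Filter.limsup (fun η => |a - ∫ z, g z ∂(κ t η)| / dist ξ η) (𝓝[≠] ξ)
          ≤ Filter.limsup B (𝓝[≠] ξ) :=
            Filter.limsup_le_limsup hev hcob hBtend.isBoundedUnder_le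
      _ = s / 2 * V + Λ / s + Γt * L := hBtend.limsup_eq
    rcases eq_or_lt_of_le hV0 with hVeq | hVpos
    · -- V = 0
      rw [← hVeq, Real.sqrt_zero, mul_zero, zero_add]
      refine le_of_forall_pos_le_add (fun ε hε => ?_)
      have hsε : 0 < Λ / ε := div_pos hΛ hε
      have h1 := keyls (Λ / ε) hsε
      rw [← hVeq] at h1
      have h2 : Λ / (Λ / ε) = ε := by
        field_simp
      have h3 : Γt * L = L * Γt := mul_comm _ _
      rw [mul_zero, zero_add, h2, h3] at h1
      linarith
    · -- V > 0
      have hsΛ : 0 < Real.sqrt (2 * Λ) := Real.sqrt_pos.mpr (by linarith)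
      have hsV : 0 < Real.sqrt V := Real.sqrt_pos.mpr hVpos
      have hs : 0 < Real.sqrt (2 * Λ) / Real.sqrt V := div_pos hsΛ hsV
      have h1 := keyls _ hs
      have heq : (Real.sqrt (2 * Λ) / Real.sqrt V) / 2 * V
          + Λ / (Real.sqrt (2 * Λ) / Real.sqrt V)
          = Real.sqrt (2 * Λ) * Real.sqrt V := by
        have e1 : Real.sqrt (2 * Λ) ^ 2 = 2 * Λ := Real.sq_sqrt (by linarith)
        have e2 : Real.sqrt V ^ 2 = V := Real.sq_sqrt hVpos.le
        set A := Real.sqrt (2 * Λ) with hA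
        set B := Real.sqrt V with hBB
        clear_value A B
        have e3 : Λ = A ^ 2 / 2 := by linarith
        rw [← e2, e3]
        field_simp
        ring
      have h3 : Γt * L = L * Γt := mul_comm _ _
      linarith [h1, heq.le, heq.ge]
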